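/- arXiv:1604.02578 — 3 statements merged into one kernel-verified Lean document; each statement's English description precedes it below -/
import Mathlib

section
/- Let (M_k)_{k≥1} be invertible real n×n matrices, (Ω_k)_{k≥0} and (Q_k)_{k≥1} real symmetric positive semi-definite n×n matrices, P_0 a real symmetric positive semi-definite n×n matrix, and define P_{k+1} = M_{k+1}(I + P_kΩ_k)⁻¹P_kM_{k+1}ᵀ + Q_{k+1}. Let M_{k:l} = M_k M_{k-1}⋯M_{l+1} (with M_{k:k} = I) and Ξ_k = Σ_{l=1}^{k} M_{k:l}Q_lM_{k:l}ᵀ (Ξ_0 = 0). Then for every k ≥ 0, in the Loewner order, Q_k ≤ P_k ≤ M_{k:0}P_0M_{k:0}ᵀ + Ξ_k (for k = 0 the lower bound is 0 ≤ P_0). -/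
open Matrix

/-- `Mres M l j` is the resolvent `M_{(l+j):l} = M_{l+j} ⋯ M_{l+1}`
(product of `j` one-step propagators starting after time `l`), so that
`M_{k:l} = Mres M l (k - l)` for `k ≥ l`, and `M_{k:k} = Mres M k 0 = 1`. -/
def Mres {n : ℕ} (M : ℕ → Matrix (Fin n) (Fin n) ℝ) (l : ℕ) :
    ℕ → Matrix (Fin n) (Fin n) ℝ
  | 0 => 1
  | j + 1 => M (l + j + 1) * Mres M l j

/-- The controllability matrix `Ξ_k = Σ_{l=1}^{k} M_{k:l} * Q_l * M_{k:l}ᵀ`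
(with `Ξ_0 = 0`). -/
noncomputable def Xi {n : ℕ} (M Q : ℕ → Matrix (Fin n) (Fin n) ℝ) (k : ℕ) :
    Matrix (Fin n) (Fin n) ℝ :=
  ∑ l ∈ Finset.Icc 1 k, Mres M l (k - l) * Q l * (Mres M l (k - l))ᵀ

lemma kf_conjPSD {n : ℕ} {A : Matrix (Fin n) (Fin n) ℝ} (hA : A.PosSemidef)
    (B : Matrix (Fin n) (Fin n) ℝ) : (B * A * Bᵀ).PosSemidef := by
  simpa [conjTranspose_eq_transpose_of_trivial] using hA.mul_mul_conjTranspose_same B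

lemma kf_key {n : ℕ} {P Ω : Matrix (Fin n) (Fin n) ℝ}
    (hP : P.PosSemidef) (hΩ : Ω.PosSemidef) :
    ((1 + P * Ω)⁻¹ * P).PosSemidef ∧ (P - (1 + P * Ω)⁻¹ * P).PosSemidef := by
  obtain ⟨S, hS, hSS⟩ : ∃ S : Matrix (Fin n) (Fin n) ℝ, S.PosSemidef ∧ S * S = P := by
    open scoped MatrixOrder in
    exact ⟨CFC.sqrt P, (CFC.sqrt_nonneg P).posSemidef, CFC.sqrt_mul_sqrt_self P hP.nonneg⟩
  have hSt : Sᵀ = S := by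
    have h := hS.isHermitian
    rwa [Matrix.IsHermitian, conjTranspose_eq_transpose_of_trivial] at h
  set B := S * Ω * S with hBdef
  have hB : B.PosSemidef := by
    have h := hΩ.mul_mul_conjTranspose_same S
    rwa [conjTranspose_eq_transpose_of_trivial, hSt] at h
  have h1B : (1 + B).PosDef := Matrix.PosDef.one.add_posSemidef hB
  have hdet : IsUnit (1 + B).det := (Matrix.isUnit_iff_isUnit_det _).mp h1B.isUnit
  have hinv : (1 + B) * (1 + B)⁻¹ = 1 := Matrix.mul_nonsing_inv _ hdet
  have hinv' : (1 + B)⁻¹ * (1 + B) = 1 := Matrix.nonsing_inv_mul _ hdet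
  have hc : (1 : Matrix (Fin n) (Fin n) ℝ) * (1 + B)⁻¹ + B * (1 + B)⁻¹ = 1 := by
    rw [← add_mul, hinv]
  have hright : (1 + P * Ω) * (1 - S * (1 + B)⁻¹ * (S * Ω)) = 1 := by
    calc (1 + P * Ω) * (1 - S * (1 + B)⁻¹ * (S * Ω))
        = 1 + P * Ω - S * ((1 : Matrix (Fin n) (Fin n) ℝ) * (1 + B)⁻¹ + B * (1 + B)⁻¹)
            * (S * Ω) := by rw [← hSS, hBdef]; noncomm_ring
      _ = 1 := by rw [hc, ← hSS]; noncomm_ring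
  have hKinv : (1 + P * Ω)⁻¹ = 1 - S * (1 + B)⁻¹ * (S * Ω) := Matrix.inv_eq_right_inv hright
  have hc2 : (1 : Matrix (Fin n) (Fin n) ℝ) - (1 + B)⁻¹ * B = (1 + B)⁻¹ := by
    have h := hinv'
    rw [mul_add, mul_one] at h
    rw [sub_eq_iff_eq_add]
    exact h.symm
  have hK : (1 + P * Ω)⁻¹ * P = S * (1 + B)⁻¹ * S := by
    rw [hKinv]
    calc (1 - S * (1 + B)⁻¹ * (S * Ω)) * P
        = S * ((1 : Matrix (Fin n) (Fin n) ℝ) - (1 + B)⁻¹ * B) * S := by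
          rw [← hSS, hBdef]; noncomm_ring
      _ = S * (1 + B)⁻¹ * S := by rw [hc2]
  have hinvPSD : ((1 + B)⁻¹).PosSemidef := h1B.inv.posSemidef
  have hinvt : ((1 + B)⁻¹)ᵀ = (1 + B)⁻¹ := by
    have h := hinvPSD.isHermitian
    rwa [Matrix.IsHermitian, conjTranspose_eq_transpose_of_trivial] at h
  constructor
  · rw [hK]
    have := kf_conjPSD hinvPSD S
    rwa [hSt] at this
  · rw [hK]
    have hBt : Bᵀ = B := by
      have h := hB.isHermitian
      rwa [Matrix.IsHermitian, conjTranspose_eq_transpose_of_trivial] at h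
    have hBsq : (B * B).PosSemidef := by
      have := Matrix.posSemidef_conjTranspose_mul_self B
      rwa [conjTranspose_eq_transpose_of_trivial, hBt] at this
    have hBB : (B + B * B).PosSemidef := hB.add hBsq
    have heq : P - S * (1 + B)⁻¹ * S
        = (S * (1 + B)⁻¹) * (B + B * B) * (S * (1 + B)⁻¹)ᵀ := by
      rw [transpose_mul, hinvt, hSt]
      have e1 : (1 : Matrix (Fin n) (Fin n) ℝ) - (1 + B)⁻¹ = (1 + B)⁻¹ * B := by
        conv_lhs => rw [← hc2]
        abel
      have e2 : (B + B * B) * (1 + B)⁻¹ = B := by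
        calc (B + B * B) * (1 + B)⁻¹ = B * ((1 + B) * (1 + B)⁻¹) := by noncomm_ring
          _ = B := by rw [hinv, mul_one]
      calc P - S * (1 + B)⁻¹ * S
          = S * ((1 : Matrix (Fin n) (Fin n) ℝ) - (1 + B)⁻¹) * S := by
            rw [← hSS]; noncomm_ring
        _ = S * (1 + B)⁻¹ * ((B + B * B) * (1 + B)⁻¹) * S := by rw [e1, e2]; noncomm_ring
        _ = S * (1 + B)⁻¹ * (B + B * B) * ((1 + B)⁻¹ * S) := by noncomm_ring
    rw [heq]
    exact kf_conjPSD hBB _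

lemma Xi_succ_aux {n : ℕ} (M Q : ℕ → Matrix (Fin n) (Fin n) ℝ) (k : ℕ) :
    (∑ l ∈ Finset.Icc 1 (k + 1), Mres M l ((k + 1) - l) * Q l * (Mres M l ((k + 1) - l))ᵀ)
      = M (k + 1) * (∑ l ∈ Finset.Icc 1 k, Mres M l (k - l) * Q l * (Mres M l (k - l))ᵀ)
          * (M (k + 1))ᵀ + Q (k + 1) := by
  rw [Finset.sum_Icc_succ_top (Nat.le_add_left 1 k)]
  have hlast : Mres M (k + 1) ((k + 1) - (k + 1)) = 1 := by
    rw [Nat.sub_self]; rfl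
  rw [hlast, Matrix.one_mul, transpose_one, Matrix.mul_one]
  congr 1
  rw [Finset.mul_sum, Finset.sum_mul]
  refine Finset.sum_congr rfl fun l hl => ?_
  obtain ⟨hl1, hl2⟩ := Finset.mem_Icc.mp hl
  have h1 : (k + 1) - l = (k - l) + 1 := by omega
  rw [h1]
  have h2 : Mres M l (k - l + 1) = M (k + 1) * Mres M l (k - l) := by
    show M (l + (k - l) + 1) * Mres M l (k - l) = _
    rw [show l + (k - l) = k from by omega]
  rw [h2, transpose_mul]
  noncomm_ring

/-- For the Kalman filter covariance recurrence
`P_{k+1} = M_{k+1} (I + P_k Ω_k)⁻¹ P_k M_{k+1}ᵀ + Q_{k+1}`, in the Loewner order,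
`Q_k ≤ P_k ≤ M_{k:0} P_0 M_{k:0}ᵀ + Ξ_k` for every `k` (the lower bound is stated
for `k ≥ 1`; for `k = 0` it is `0 ≤ P_0`, which is the hypothesis on `P_0`). -/
theorem kf_free_forecast_bounds {n : ℕ}
    (M Ω Q : ℕ → Matrix (Fin n) (Fin n) ℝ)
    (hM : ∀ k, 1 ≤ k → IsUnit (M k))
    (hΩ : ∀ k, (Ω k).PosSemidef) (hQ : ∀ k, 1 ≤ k → (Q k).PosSemidef)
    (P : ℕ → Matrix (Fin n) (Fin n) ℝ) (hP0 : (P 0).PosSemidef)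
    (hrec : ∀ k, P (k + 1)
      = M (k + 1) * (1 + P k * Ω k)⁻¹ * P k * (M (k + 1))ᵀ + Q (k + 1)) :
    (∀ k, 1 ≤ k → (P k - Q k).PosSemidef) ∧
    (∀ k, (Mres M 0 k * P 0 * (Mres M 0 k)ᵀ + Xi M Q k - P k).PosSemidef) := by
  have hconj : ∀ k, (M (k + 1) * (1 + P k * Ω k)⁻¹ * P k * (M (k + 1))ᵀ)
      = M (k + 1) * ((1 + P k * Ω k)⁻¹ * P k) * (M (k + 1))ᵀ := fun k => by
    rw [Matrix.mul_assoc (M (k + 1))]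
  have hPsd : ∀ k, (P k).PosSemidef := by
    intro k
    induction k with
    | zero => exact hP0
    | succ k ih =>
      rw [hrec k, hconj k]
      exact (kf_conjPSD (kf_key ih (hΩ k)).1 (M (k + 1))).add (hQ (k + 1) (Nat.le_add_left 1 k))
  constructor
  · rintro (_ | k) hk
    · omega
    · rw [hrec k, hconj k, add_sub_cancel_right]
      exact kf_conjPSD (kf_key (hPsd k) (hΩ k)).1 (M (k + 1))
  · intro k
    induction k with
    | zero =>
      have : Mres M 0 0 * P 0 * (Mres M 0 0)ᵀ + Xi M Q 0 - P 0 = 0 := by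
        show (1 : Matrix (Fin n) (Fin n) ℝ) * P 0 * (1 : Matrix (Fin n) (Fin n) ℝ)ᵀ
            + Xi M Q 0 - P 0 = 0
        rw [show Xi M Q 0 = 0 from by simp [Xi]]
        simp
      rw [this]
      exact Matrix.PosSemidef.zero
    | succ k ih =>
      have hMres : Mres M 0 (k + 1) = M (k + 1) * Mres M 0 k := by
        show M (0 + k + 1) * Mres M 0 k = _
        rw [Nat.zero_add]
      have hXi : Xi M Q (k + 1) = M (k + 1) * Xi M Q k * (M (k + 1))ᵀ + Q (k + 1) :=
        Xi_succ_aux M Q k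
      have heq : Mres M 0 (k + 1) * P 0 * (Mres M 0 (k + 1))ᵀ + Xi M Q (k + 1) - P (k + 1)
          = M (k + 1) * ((Mres M 0 k * P 0 * (Mres M 0 k)ᵀ + Xi M Q k - P k)
              + (P k - (1 + P k * Ω k)⁻¹ * P k)) * (M (k + 1))ᵀ := by
        rw [hMres, hXi, hrec k, transpose_mul]
        noncomm_ring
      rw [heq]
      exact kf_conjPSD (ih.add (kf_key (hPsd k) (hΩ k)).2) (M (k + 1))
end

section
/- Let (M_k)_{k≥1} be invertible real n×n matrices, (Ω_k)_{k≥0} real symmetric positive semi-definite n×n matrices, and P_0 any real symmetric positive semi-definite n×n matrix (possibly rank-deficient). Define P_{k+1} = M_{k+1}(I + P_kΩ_k)⁻¹P_kM_{k+1}ᵀ. Let M_{k:l} = M_k⋯M_{l+1} (with M_{k:k} = I) and Γ_k = Σ_{l=0}^{k-1} M_{k:l}^{-ᵀ}Ω_lM_{k:l}^{-1}. Then for every k ≥ 0 the matrix I + Γ_kM_{k:0}P_0M_{k:0}ᵀ is invertible and P_k = M_{k:0}P_0M_{k:0}ᵀ(I + Γ_kM_{k:0}P_0M_{k:0}ᵀ)⁻¹.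 -/
open Matrix

/-- The information matrix `Γ_k = Σ_{l=0}^{k-1} M_{k:l}⁻ᵀ * Ω_l * M_{k:l}⁻¹`. -/
noncomputable def Gamma {n : ℕ} (M Ω : ℕ → Matrix (Fin n) (Fin n) ℝ) (k : ℕ) :
    Matrix (Fin n) (Fin n) ℝ :=
  ∑ l ∈ Finset.range k, ((Mres M l (k - l))⁻¹)ᵀ * Ω l * (Mres M l (k - l))⁻¹

section Aux

variable {n : ℕ}

lemma psd_transpose_eq {A : Matrix (Fin n) (Fin n) ℝ} (hA : A.PosSemidef) :
    Aᵀ = A := by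
  rw [← conjTranspose_eq_transpose_of_trivial]; exact hA.1

open scoped MatrixOrder in
/-- `1 + A * B` is invertible when `A, B` are positive semi-definite. -/
lemma isUnit_one_add_psd_mul {A B : Matrix (Fin n) (Fin n) ℝ}
    (hA : A.PosSemidef) (hB : B.PosSemidef) : IsUnit (1 + A * B) := by
  have hs := (CFC.sqrt_nonneg A).posSemidef
  have hdet : (1 + A * B).det = (1 + CFC.sqrt A * B * CFC.sqrt A).det := by
    conv_lhs => rw [← CFC.sqrt_mul_sqrt_self A hA.nonneg, Matrix.mul_assoc,
      det_one_add_mul_comm]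
  have hpsd : (CFC.sqrt A * B * CFC.sqrt A).PosSemidef := by
    have := hB.mul_mul_conjTranspose_same (CFC.sqrt A)
    rwa [hs.1] at this
  have hpos : (1 + CFC.sqrt A * B * CFC.sqrt A).PosDef :=
    Matrix.PosDef.add_posSemidef Matrix.PosDef.one hpsd
  rw [Matrix.isUnit_iff_isUnit_det, hdet]
  exact hpos.det_pos.ne'.isUnit

lemma psd_conj {A : Matrix (Fin n) (Fin n) ℝ} (hA : A.PosSemidef)
    (B : Matrix (Fin n) (Fin n) ℝ) : (B * A * Bᵀ).PosSemidef := by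
  have := hA.mul_mul_conjTranspose_same B
  rwa [conjTranspose_eq_transpose_of_trivial] at this

lemma psd_conj' {A : Matrix (Fin n) (Fin n) ℝ} (hA : A.PosSemidef)
    (B : Matrix (Fin n) (Fin n) ℝ) : (Bᵀ * A * B).PosSemidef := by
  have := hA.conjTranspose_mul_mul_same B
  rwa [conjTranspose_eq_transpose_of_trivial] at this

/-- The key positive semi-definiteness step for the Kalman recurrence: the
matrix `(1 + P * Ω)⁻¹ * P` is positive semi-definite. -/
lemma psd_inv_one_add_mul {P Ω : Matrix (Fin n) (Fin n) ℝ}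
    (hP : P.PosSemidef) (hΩ : Ω.PosSemidef) :
    ((1 + P * Ω)⁻¹ * P).PosSemidef := by
  have hPt : Pᵀ = P := psd_transpose_eq hP
  have hΩt : Ωᵀ = Ω := psd_transpose_eq hΩ
  have hTr : (1 + P * Ω)ᵀ = 1 + Ω * P := by
    rw [transpose_add, transpose_one, transpose_mul, hPt, hΩt]
  have hdet : IsUnit (1 + P * Ω).det :=
    (Matrix.isUnit_iff_isUnit_det _).1 (isUnit_one_add_psd_mul hP hΩ)
  have hdet' : IsUnit (1 + Ω * P).det := by
    rw [← hTr, det_transpose]; exact hdet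
  have hPΩP : (P * Ω * P).PosSemidef := by
    have := psd_conj hΩ P; rwa [hPt] at this
  have hinner : (P + P * Ω * P).PosSemidef := hP.add hPΩP
  have hkey : (1 + P * Ω)⁻¹ * P
      = (1 + P * Ω)⁻¹ * (P + P * Ω * P) * ((1 + P * Ω)⁻¹)ᵀ := by
    rw [transpose_nonsing_inv, hTr]
    have hfac : P + P * Ω * P = P * (1 + Ω * P) := by
      rw [Matrix.mul_add, Matrix.mul_one, Matrix.mul_assoc]
    rw [hfac, ← Matrix.mul_assoc,
      Matrix.mul_nonsing_inv_cancel_right _ _ hdet']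
  rw [hkey]
  exact psd_conj hinner _

variable (M Ω : ℕ → Matrix (Fin n) (Fin n) ℝ)

lemma Mres_zero_succ (k : ℕ) : Mres M 0 (k + 1) = M (k + 1) * Mres M 0 k := by
  show M (0 + k + 1) * Mres M 0 k = _
  rw [Nat.zero_add]

lemma Gamma_succ (k : ℕ) :
    Gamma M Ω (k + 1)
      = ((M (k + 1))⁻¹)ᵀ * (Gamma M Ω k + Ω k) * (M (k + 1))⁻¹ := by
  unfold Gamma
  rw [Finset.sum_range_succ]
  have hlast : Mres M k (k + 1 - k) = M (k + 1) := by
    have h1 : k + 1 - k = 1 := by omega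
    rw [h1]
    show M (k + 0 + 1) * (1 : Matrix (Fin n) (Fin n) ℝ) = _
    rw [Nat.add_zero, Matrix.mul_one]
  rw [hlast]
  have hterm : ∀ l ∈ Finset.range k,
      ((Mres M l (k + 1 - l))⁻¹)ᵀ * Ω l * (Mres M l (k + 1 - l))⁻¹
        = ((M (k + 1))⁻¹)ᵀ
            * (((Mres M l (k - l))⁻¹)ᵀ * Ω l * (Mres M l (k - l))⁻¹)
            * (M (k + 1))⁻¹ := by
    intro l hl
    have hlk : l < k := Finset.mem_range.1 hl
    have h1 : k + 1 - l = (k - l) + 1 := by omega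
    have h2 : l + (k - l) + 1 = k + 1 := by omega
    rw [h1]
    have h3 : Mres M l ((k - l) + 1) = M (k + 1) * Mres M l (k - l) := by
      show M (l + (k - l) + 1) * Mres M l (k - l) = _
      rw [h2]
    rw [h3, Matrix.mul_inv_rev, transpose_mul]
    simp only [Matrix.mul_assoc]
  rw [Finset.sum_congr rfl hterm]
  simp only [← Finset.mul_sum, ← Finset.sum_mul, Matrix.mul_add,
    Matrix.add_mul]

lemma Gamma_psd (hΩ : ∀ k, (Ω k).PosSemidef) (k : ℕ) :
    (Gamma M Ω k).PosSemidef := by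
  induction k with
  | zero =>
      show Matrix.PosSemidef (∑ l ∈ Finset.range 0, _)
      rw [Finset.sum_range_zero]
      exact Matrix.PosSemidef.zero
  | succ k ih =>
      rw [Gamma_succ]
      exact psd_conj' (ih.add (hΩ k)) _

end Aux

/-- Closed form of the perfect-model Kalman filter covariance for a possibly
rank-deficient initial covariance `P_0`:
`P_k = M_{k:0} P_0 M_{k:0}ᵀ (I + Γ_k M_{k:0} P_0 M_{k:0}ᵀ)⁻¹`,
where the indicated inverse exists. -/
theorem kf_closed_form {n : ℕ}
    (M Ω : ℕ → Matrix (Fin n) (Fin n) ℝ)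
    (hM : ∀ k, 1 ≤ k → IsUnit (M k)) (hΩ : ∀ k, (Ω k).PosSemidef)
    (P : ℕ → Matrix (Fin n) (Fin n) ℝ) (hP0 : (P 0).PosSemidef)
    (hrec : ∀ k, P (k + 1)
      = M (k + 1) * (1 + P k * Ω k)⁻¹ * P k * (M (k + 1))ᵀ) :
    ∀ k, IsUnit (1 + Gamma M Ω k * (Mres M 0 k * P 0 * (Mres M 0 k)ᵀ)) ∧
      P k = Mres M 0 k * P 0 * (Mres M 0 k)ᵀ
        * (1 + Gamma M Ω k * (Mres M 0 k * P 0 * (Mres M 0 k)ᵀ))⁻¹ := by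
  suffices h : ∀ k, (P k).PosSemidef ∧
      (IsUnit (1 + Gamma M Ω k * (Mres M 0 k * P 0 * (Mres M 0 k)ᵀ)) ∧
      P k = Mres M 0 k * P 0 * (Mres M 0 k)ᵀ
        * (1 + Gamma M Ω k * (Mres M 0 k * P 0 * (Mres M 0 k)ᵀ))⁻¹) by
    exact fun k => (h k).2
  intro k
  induction k with
  | zero =>
      refine ⟨hP0, ?_, ?_⟩
      · show IsUnit (1 + (∑ l ∈ Finset.range 0, _) * _)
        rw [Finset.sum_range_zero, Matrix.zero_mul, add_zero]
        exact isUnit_one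
      · show P 0 = (1 : Matrix (Fin n) (Fin n) ℝ) * P 0 * (1ᵀ)
          * (1 + (∑ l ∈ Finset.range 0, _) * _)⁻¹
        rw [Finset.sum_range_zero, Matrix.zero_mul, add_zero, inv_one,
          transpose_one, Matrix.one_mul, Matrix.mul_one, Matrix.mul_one]
  | succ k ih =>
      obtain ⟨hPk, hU, hEq⟩ := ih
      set S : Matrix (Fin n) (Fin n) ℝ := Mres M 0 k * P 0 * (Mres M 0 k)ᵀ
        with hSdef
      set Γ : Matrix (Fin n) (Fin n) ℝ := Gamma M Ω k with hΓdef
      have hS : S.PosSemidef := psd_conj hP0 _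
      have hΓpsd : Γ.PosSemidef := Gamma_psd M Ω hΩ k
      have hUdet : IsUnit (1 + Γ * S).det :=
        (Matrix.isUnit_iff_isUnit_det _).1 hU
      set T : Matrix (Fin n) (Fin n) ℝ := 1 + (Γ + Ω k) * S with hTdef
      have hTunit : IsUnit T := isUnit_one_add_psd_mul (hΓpsd.add (hΩ k)) hS
      have hTdet : IsUnit T.det := (Matrix.isUnit_iff_isUnit_det _).1 hTunit
      have hPΩunit : IsUnit (1 + P k * Ω k) :=
        isUnit_one_add_psd_mul hPk (hΩ k)
      have hPΩdet : IsUnit (1 + P k * Ω k).det :=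
        (Matrix.isUnit_iff_isUnit_det _).1 hPΩunit
      -- key algebraic identity
      have h1 : P k * (1 + Γ * S) = S := by
        rw [hEq, Matrix.nonsing_inv_mul_cancel_right _ _ hUdet]
      have h2 : (1 + P k * Ω k) * S = P k * T := by
        have hT' : P k * T = P k * (1 + Γ * S) + P k * (Ω k * S) := by
          rw [hTdef]; noncomm_ring
        rw [hT', h1]; noncomm_ring
      have h3 : (1 + P k * Ω k)⁻¹ * P k = S * T⁻¹ := by
        have key : (1 + P k * Ω k) * (S * T⁻¹) = P k := by
          rw [← Matrix.mul_assoc, h2,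
            Matrix.mul_nonsing_inv_cancel_right _ _ hTdet]
        calc (1 + P k * Ω k)⁻¹ * P k
            = (1 + P k * Ω k)⁻¹ * ((1 + P k * Ω k) * (S * T⁻¹)) := by rw [key]
          _ = S * T⁻¹ := by
              rw [← Matrix.mul_assoc, Matrix.nonsing_inv_mul _ hPΩdet,
                Matrix.one_mul]
      -- the matrix M_{k+1} and its inverse facts
      set Mk : Matrix (Fin n) (Fin n) ℝ := M (k + 1) with hMkdef
      have hMkunit : IsUnit Mk := hM (k + 1) (by omega)
      have hMkdet : IsUnit Mk.det := (Matrix.isUnit_iff_isUnit_det _).1 hMkunit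
      have hMkTdet : IsUnit (Mkᵀ).det := by rwa [det_transpose]
      have h4 : (Mk⁻¹)ᵀ * Mkᵀ = 1 := by
        rw [← transpose_mul, Matrix.mul_nonsing_inv _ hMkdet, transpose_one]
      have h5 : ∀ X : Matrix (Fin n) (Fin n) ℝ, Mk⁻¹ * (Mk * X) = X := by
        intro X
        rw [← Matrix.mul_assoc, Matrix.nonsing_inv_mul _ hMkdet,
          Matrix.one_mul]
      have h6 : ∀ X : Matrix (Fin n) (Fin n) ℝ, Mkᵀ * ((Mkᵀ)⁻¹ * X) = X := by
        intro X
        rw [← Matrix.mul_assoc, Matrix.mul_nonsing_inv _ hMkTdet,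
          Matrix.one_mul]
      -- rewrite the (k+1)-data
      have hSsucc : Mres M 0 (k + 1) * P 0 * (Mres M 0 (k + 1))ᵀ
          = Mk * S * Mkᵀ := by
        rw [Mres_zero_succ, transpose_mul, hSdef]
        simp only [Matrix.mul_assoc, ← hMkdef]
      have hconj : 1 + Gamma M Ω (k + 1)
            * (Mres M 0 (k + 1) * P 0 * (Mres M 0 (k + 1))ᵀ)
          = (Mk⁻¹)ᵀ * T * Mkᵀ := by
        rw [hSsucc, Gamma_succ, hTdef, ← hΓdef, ← hMkdef]
        simp only [Matrix.mul_add, Matrix.add_mul, Matrix.one_mul,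
          Matrix.mul_one, Matrix.mul_assoc, h5]
        rw [h4]
      refine ⟨?_, ?_, ?_⟩
      · -- positive semi-definiteness of P (k+1)
        rw [hrec k, ← hMkdef, Matrix.mul_assoc Mk]
        exact psd_conj (psd_inv_one_add_mul hPk (hΩ k)) Mk
      · rw [hconj]
        have hMkTunit : IsUnit (Mkᵀ) :=
          ⟨⟨Mkᵀ, (Mkᵀ)⁻¹, Matrix.mul_nonsing_inv _ hMkTdet,
            Matrix.nonsing_inv_mul _ hMkTdet⟩, rfl⟩
        have hMkinvTunit : IsUnit ((Mk⁻¹)ᵀ) := by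
          rw [transpose_nonsing_inv]
          exact ⟨⟨(Mkᵀ)⁻¹, Mkᵀ, Matrix.nonsing_inv_mul _ hMkTdet,
            Matrix.mul_nonsing_inv _ hMkTdet⟩, rfl⟩
        exact (hMkinvTunit.mul hTunit).mul hMkTunit
      · rw [hconj, hrec k, ← hMkdef, hSsucc]
        have hinv : ((Mk⁻¹)ᵀ * T * Mkᵀ)⁻¹ = (Mkᵀ)⁻¹ * T⁻¹ * Mkᵀ := by
          rw [Matrix.mul_inv_rev, Matrix.mul_inv_rev, transpose_nonsing_inv,
            Matrix.nonsing_inv_nonsing_inv _ hMkTdet, ← Matrix.mul_assoc]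
        rw [hinv, Matrix.mul_assoc Mk _ (P k), h3]
        simp only [Matrix.mul_assoc, h6]
end

section
/- Let (M_k)_{k≥1} be invertible real n×n matrices, (Ω_k)_{k≥0} real symmetric positive semi-definite n×n matrices, and suppose P_0 = WG⁻¹Wᵀ, where W is a real n×r matrix and G is a real symmetric positive definite r×r matrix. Define P_{k+1} = M_{k+1}(I + P_kΩ_k)⁻¹P_kM_{k+1}ᵀ, M_{l:0} = M_l⋯M_1, and Θ_k = Σ_{l=0}^{k−1} M_{l:0}ᵀΩ_lM_{l:0}. Then for every k ≥ 0 the r×r matrix G + WᵀΘ_kW is invertible and P_k = M_{k:0}W(G + WᵀΘ_kW)⁻¹WᵀM_{k:0}ᵀ. -/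
open Matrix

/-- The observability matrix pulled back to initial time:
`Θ_k = Σ_{l=0}^{k-1} M_{l:0}ᵀ * Ω_l * M_{l:0}`. -/
noncomputable def Theta {n : ℕ} (M Ω : ℕ → Matrix (Fin n) (Fin n) ℝ) (k : ℕ) :
    Matrix (Fin n) (Fin n) ℝ :=
  ∑ l ∈ Finset.range k, (Mres M 0 l)ᵀ * Ω l * Mres M 0 l

/-- If `P` and `Q` are positive semi-definite, then `1 + P * Q` is invertible. -/
lemma isUnit_one_add_psd_mul_s19 {n : ℕ} {P Q : Matrix (Fin n) (Fin n) ℝ}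
    (hP : P.PosSemidef) (hQ : Q.PosSemidef) : IsUnit (1 + P * Q) := by
  rw [← Matrix.mulVec_injective_iff_isUnit]
  have hker : ∀ x, (1 + P * Q) *ᵥ x = 0 → x = 0 := by
    intro x hx
    rw [add_mulVec, one_mulVec, ← Matrix.mulVec_mulVec] at hx
    have hxe : x = -(P *ᵥ (Q *ᵥ x)) := eq_neg_of_add_eq_zero_left hx
    have h1 : x ⬝ᵥ Q *ᵥ x = -((Q *ᵥ x) ⬝ᵥ P *ᵥ (Q *ᵥ x)) := by
      nth_rewrite 1 [hxe]
      rw [neg_dotProduct, dotProduct_comm]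
    have h2 : (0:ℝ) ≤ x ⬝ᵥ Q *ᵥ x := by simpa using hQ.dotProduct_mulVec_nonneg x
    have h3 : (0:ℝ) ≤ (Q *ᵥ x) ⬝ᵥ P *ᵥ (Q *ᵥ x) := by simpa using hP.dotProduct_mulVec_nonneg (Q *ᵥ x)
    have h4 : x ⬝ᵥ Q *ᵥ x = 0 := le_antisymm (by linarith) h2
    have h5 : Q *ᵥ x = 0 := (hQ.dotProduct_mulVec_zero_iff x).mp (by simpa using h4)
    rw [hxe, h5, Matrix.mulVec_zero, neg_zero]
  intro a b hab
  have h0 : (1 + P * Q) *ᵥ (a - b) = 0 := by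
    rw [Matrix.mulVec_sub, hab, sub_self]
  exact sub_eq_zero.mp (hker _ h0)

/-- The key one-step algebraic identity of the Kalman filter recursion. -/
lemma key_step {n r : ℕ} (A : Matrix (Fin n) (Fin r) ℝ)
    (Gk : Matrix (Fin r) (Fin r) ℝ) (Q : Matrix (Fin n) (Fin n) ℝ)
    (hGk : Gk.PosDef) (hQ : Q.PosSemidef) :
    (1 + (A * Gk⁻¹ * Aᵀ) * Q)⁻¹ * (A * Gk⁻¹ * Aᵀ)
      = A * (Gk + Aᵀ * Q * A)⁻¹ * Aᵀ := by
  have hPsd : (A * Gk⁻¹ * Aᵀ).PosSemidef := by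
    have := (hGk.inv.posSemidef).mul_mul_conjTranspose_same A
    simpa using this
  have hS : (Gk + Aᵀ * Q * A).PosDef := by
    have h1 : (Aᵀ * Q * A).PosSemidef := by
      have := hQ.conjTranspose_mul_mul_same A
      simpa using this
    exact hGk.add_posSemidef h1
  have hX : IsUnit (1 + (A * Gk⁻¹ * Aᵀ) * Q) := isUnit_one_add_psd_mul_s19 hPsd hQ
  have hXd : IsUnit (1 + (A * Gk⁻¹ * Aᵀ) * Q).det := (Matrix.isUnit_iff_isUnit_det _).mp hX
  have hSd : IsUnit (Gk + Aᵀ * Q * A).det := (Matrix.isUnit_iff_isUnit_det _).mp hS.isUnit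
  have hGd : IsUnit Gk.det := (Matrix.isUnit_iff_isUnit_det _).mp hGk.isUnit
  have e2 : (1 + (A * Gk⁻¹ * Aᵀ) * Q) * A = A * Gk⁻¹ * (Gk + Aᵀ * Q * A) := by
    rw [Matrix.add_mul, Matrix.one_mul, Matrix.mul_add, Matrix.mul_assoc A Gk⁻¹ Gk,
      Matrix.nonsing_inv_mul Gk hGd, Matrix.mul_one]
    simp [Matrix.mul_assoc]
  have hmain : (1 + (A * Gk⁻¹ * Aᵀ) * Q) * (A * (Gk + Aᵀ * Q * A)⁻¹ * Aᵀ)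
      = A * Gk⁻¹ * Aᵀ := by
    calc (1 + (A * Gk⁻¹ * Aᵀ) * Q) * (A * (Gk + Aᵀ * Q * A)⁻¹ * Aᵀ)
        = ((1 + (A * Gk⁻¹ * Aᵀ) * Q) * A) * ((Gk + Aᵀ * Q * A)⁻¹ * Aᵀ) := by
          simp [Matrix.mul_assoc]
      _ = A * Gk⁻¹ * ((Gk + Aᵀ * Q * A) * ((Gk + Aᵀ * Q * A)⁻¹ * Aᵀ)) := by
          rw [e2]; simp [Matrix.mul_assoc]
      _ = A * Gk⁻¹ * Aᵀ := by rw [Matrix.mul_nonsing_inv_cancel_left _ _ hSd]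
  rw [← Matrix.nonsing_inv_mul_cancel_left (1 + A * Gk⁻¹ * Aᵀ * Q)
    (A * (Gk + Aᵀ * Q * A)⁻¹ * Aᵀ) hXd, hmain]

/-- Factorized closed form of the perfect-model Kalman filter covariance when
`P_0 = W G⁻¹ Wᵀ` with `G` positive definite: for all `k`, the `r × r` matrix
`G + Wᵀ Θ_k W` is invertible and
`P_k = M_{k:0} W (G + Wᵀ Θ_k W)⁻¹ Wᵀ M_{k:0}ᵀ`. -/
theorem kf_factorized_closed_form {n r : ℕ}
    (M Ω : ℕ → Matrix (Fin n) (Fin n) ℝ)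
    (hM : ∀ k, 1 ≤ k → IsUnit (M k)) (hΩ : ∀ k, (Ω k).PosSemidef)
    (W : Matrix (Fin n) (Fin r) ℝ) (G : Matrix (Fin r) (Fin r) ℝ)
    (hG : G.PosDef)
    (P : ℕ → Matrix (Fin n) (Fin n) ℝ) (hP0 : P 0 = W * G⁻¹ * Wᵀ)
    (hrec : ∀ k, P (k + 1)
      = M (k + 1) * (1 + P k * Ω k)⁻¹ * P k * (M (k + 1))ᵀ) :
    ∀ k, IsUnit (G + Wᵀ * Theta M Ω k * W) ∧
      P k = Mres M 0 k * W * (G + Wᵀ * Theta M Ω k * W)⁻¹ * Wᵀ * (Mres M 0 k)ᵀ := by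
  have main : ∀ k, (G + Wᵀ * Theta M Ω k * W).PosDef ∧
      P k = Mres M 0 k * W * (G + Wᵀ * Theta M Ω k * W)⁻¹ * Wᵀ * (Mres M 0 k)ᵀ := by
    intro k
    induction k with
    | zero =>
      constructor
      · simpa [Theta] using hG
      · simpa [Theta, Mres] using hP0
    | succ k ih =>
      obtain ⟨hGk, hPk⟩ := ih
      set A := Mres M 0 k * W with hA
      have hGsucc : G + Wᵀ * Theta M Ω (k+1) * W
          = (G + Wᵀ * Theta M Ω k * W) + Aᵀ * Ω k * A := by
        simp [Theta, Finset.sum_range_succ, Matrix.mul_add, Matrix.add_mul, hA,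
          Matrix.transpose_mul, Matrix.mul_assoc, add_assoc]
      have hpsdA : (Aᵀ * Ω k * A).PosSemidef := by
        have := (hΩ k).conjTranspose_mul_mul_same A
        simpa using this
      refine ⟨by rw [hGsucc]; exact hGk.add_posSemidef hpsdA, ?_⟩
      have hPkA : P k = A * (G + Wᵀ * Theta M Ω k * W)⁻¹ * Aᵀ := by
        rw [hPk]
        simp [hA, Matrix.transpose_mul, Matrix.mul_assoc]
      have hMres : Mres M 0 (k+1) = M (k+1) * Mres M 0 k := by
        simp [Mres]
      have hkey := key_step A (G + Wᵀ * Theta M Ω k * W) (Ω k) hGk (hΩ k)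
      rw [hrec k, hPkA, hGsucc, hMres,
        Matrix.mul_assoc (M (k+1)) ((1 + A * (G + Wᵀ * Theta M Ω k * W)⁻¹ * Aᵀ * Ω k)⁻¹)
          (A * (G + Wᵀ * Theta M Ω k * W)⁻¹ * Aᵀ), hkey]
      simp [hA, Matrix.transpose_mul, Matrix.mul_assoc]
  intro k
  exact ⟨(main k).1.isUnit, (main k).2⟩
end
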